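/- Let Σ be a finite alphabet and M a rational Kripke model over Σ whose state set is all of Σ*, whose atomic relations R_π are rational relations on Σ*, and whose atomic valuations V(p) are regular languages. Then, by mutual induction over the syntax of WPDL: for every WPDL program α the relation R_α ⊆ Σ* × Σ* is rational, and for every WPDL formula φ the extension [[φ]]_M ⊆ Σ* is a regular language. -/

import Mathlib

open Language


/-- Rational binary relations on words, presented by a regular language over
`Option α × Option α` via the two asynchronous projections. -/
def IsRationalRel {α : Type} (R : Set (List α × List α)) : Prop :=
  ∃ L : Language (Option α × Option α), L.IsRegular ∧
    R = { p | ∃ z ∈ L, p = (z.filterMap Prod.fst, z.filterMap Prod.snd) }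

mutual
  /-- WPDL formulas over the alphabet `α`, atomic propositions `AP`
  and atomic programs `REL`. -/
  inductive WForm (α AP REL : Type) : Type where
    | atom : AP → WForm α AP REL
    | letter : α → WForm α AP REL
    | neg : WForm α AP REL → WForm α AP REL
    | disj : WForm α AP REL → WForm α AP REL → WForm α AP REL
    | dia : WProg α AP REL → WForm α AP REL → WForm α AP REL

  /-- WPDL programs over the alphabet `α`, atomic propositions `AP`
  and atomic programs `REL`. -/
  inductive WProg (α AP REL : Type) : Type where
    | base : REL → WProg α AP REL
    | inv : WProg α AP REL → WProg α AP REL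
    | union : WProg α AP REL → WProg α AP REL → WProg α AP REL
    | comp : WProg α AP REL → WProg α AP REL → WProg α AP REL
    | test : WForm α AP REL → WProg α AP REL
    | push : WForm α AP REL → WProg α AP REL
end

mutual
  /-- The extension `[[φ]]` of a WPDL formula in the Kripke word-model with state
  set `Σ*`, atomic relations `Rb` and valuation `V`. -/
  def WExt {α AP REL : Type} (Rb : REL → Set (List α × List α))
      (V : AP → Set (List α)) : WForm α AP REL → Set (List α)
    | .atom p => V p
    | .letter a => {[a]}
    | .neg φ => (WExt Rb V φ)ᶜ
    | .disj φ ψ => WExt Rb V φ ∪ WExt Rb V ψ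
    | .dia β φ => { u | ∃ v ∈ WExt Rb V φ, (u, v) ∈ WRel Rb V β }

  /-- The relation `R_β` associated with a WPDL program `β` in the Kripke word-model
  with state set `Σ*`, atomic relations `Rb` and valuation `V`. -/
  def WRel {α AP REL : Type} (Rb : REL → Set (List α × List α))
      (V : AP → Set (List α)) : WProg α AP REL → Set (List α × List α)
    | .base π => Rb π
    | .inv β => { p | (p.2, p.1) ∈ WRel Rb V β }
    | .union β γ => WRel Rb V β ∪ WRel Rb V γ
    | .comp β γ => { p | ∃ w, (p.1, w) ∈ WRel Rb V β ∧ (w, p.2) ∈ WRel Rb V γ }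
    | .test φ => { p | ∃ u ∈ WExt Rb V φ, p = (u, u) }
    | .push φ => { p | ∃ u ∈ WExt Rb V φ, ∃ v : List α, p = (u ++ v, v) }
end



/-- complement -/
theorem regC {β : Type} {L : Language β} (h : L.IsRegular) :
    Language.IsRegular (Lᶜ : Language β) := by
  obtain ⟨σ, _, M, rfl⟩ := h
  exact ⟨σ, ‹_›, ⟨M.step, M.start, M.acceptᶜ⟩, rfl⟩

/-- product eval -/
theorem prodEval {β σ₁ σ₂ : Type} (M₁ : DFA β σ₁) (M₂ : DFA β σ₂) (A : Set (σ₁ × σ₂))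
    (s₁ : σ₁) (s₂ : σ₂) (x : List β) :
    (DFA.mk (fun s a => (M₁.step s.1 a, M₂.step s.2 a)) (M₁.start, M₂.start) A).evalFrom
      (s₁, s₂) x = (M₁.evalFrom s₁ x, M₂.evalFrom s₂ x) := by
  induction x generalizing s₁ s₂ with
  | nil => rfl
  | cons a x ih => exact ih _ _

theorem regI {β : Type} {L₁ L₂ : Set (List β)} (h₁ : Language.IsRegular L₁) (h₂ : Language.IsRegular L₂) :
    Language.IsRegular (L₁ ∩ L₂ : Set (List β)) := by
  obtain ⟨σ₁, _, M₁, rfl⟩ := h₁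
  obtain ⟨σ₂, _, M₂, rfl⟩ := h₂
  refine ⟨σ₁ × σ₂, inferInstance,
    ⟨fun s a => (M₁.step s.1 a, M₂.step s.2 a), (M₁.start, M₂.start),
      {p | p.1 ∈ M₁.accept ∧ p.2 ∈ M₂.accept}⟩, ?_⟩
  ext x
  rw [DFA.mem_accepts, DFA.eval, prodEval]
  exact Iff.rfl

theorem regU {β : Type} {L₁ L₂ : Set (List β)} (h₁ : Language.IsRegular L₁) (h₂ : Language.IsRegular L₂) :
    Language.IsRegular (L₁ ∪ L₂ : Set (List β)) := by
  obtain ⟨σ₁, _, M₁, rfl⟩ := h₁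
  obtain ⟨σ₂, _, M₂, rfl⟩ := h₂
  refine ⟨σ₁ × σ₂, inferInstance,
    ⟨fun s a => (M₁.step s.1 a, M₂.step s.2 a), (M₁.start, M₂.start),
      {p | p.1 ∈ M₁.accept ∨ p.2 ∈ M₂.accept}⟩, ?_⟩
  ext x
  rw [DFA.mem_accepts, DFA.eval, prodEval]
  exact Iff.rfl

theorem regUniv {β : Type} : Language.IsRegular (Set.univ : Language β) :=
  ⟨Unit, inferInstance, ⟨fun _ _ => (), (), Set.univ⟩, by ext x; simp [DFA.mem_accepts]; trivial⟩

/-- preimage under filterMap -/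
theorem regPre {β γ : Type} (g : β → Option γ) {L : Language γ} (h : L.IsRegular) :
    Language.IsRegular {x : List β | x.filterMap g ∈ L} := by
  obtain ⟨σ, _, M, rfl⟩ := h
  refine ⟨σ, ‹_›, ⟨fun s b => match g b with | some c => M.step s c | none => s,
    M.start, M.accept⟩, ?_⟩
  have key : ∀ (x : List β) (s : σ),
      (DFA.mk (fun s b => match g b with | some c => M.step s c | none => s)
        M.start M.accept).evalFrom s x = M.evalFrom s (x.filterMap g) := by
    intro x
    induction x with
    | nil => intro s; rfl
    | cons b x ih =>
      intro s
      rw [List.filterMap_cons]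
      cases hg : g b with
      | none => simpa [DFA.evalFrom, List.foldl_cons, hg] using ih s
      | some c => simpa [DFA.evalFrom, List.foldl_cons, hg] using ih (M.step s c)
  ext x
  rw [DFA.mem_accepts, DFA.eval, key]
  exact Iff.rfl

/-- split lemma: if filterMap g w = c :: l then w splits -/
theorem filterMap_split {β γ : Type} (g : β → Option γ) :
    ∀ (w : List β) (c : γ) (l : List γ), w.filterMap g = c :: l →
      ∃ w₁ w₂, w = w₁ ++ w₂ ∧ w₁.filterMap g = [c] ∧ w₂.filterMap g = l := by
  intro w
  induction w with
  | nil => intro c l h; simp at h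
  | cons b w ih =>
    intro c l h
    rw [List.filterMap_cons] at h
    cases hg : g b with
    | none =>
      rw [hg] at h
      obtain ⟨w₁, w₂, rfl, h1, h2⟩ := ih c l h
      exact ⟨b :: w₁, w₂, rfl, by rw [List.filterMap_cons, hg, h1], h2⟩
    | some c' =>
      rw [hg] at h
      obtain ⟨rfl, rfl⟩ := List.cons.injEq .. ▸ h
      exact ⟨[b], w, rfl, by simp [List.filterMap_cons, hg], rfl⟩

/-- image under filterMap is regular -/
theorem regImg {β γ : Type} (g : β → Option γ) {L : Set (List β)}
    (h : Language.IsRegular L) :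
    Language.IsRegular ({u : List γ | ∃ x ∈ L, x.filterMap g = u} : Set (List γ)) := by
  classical
  obtain ⟨σ, _, M, rfl⟩ := h
  set N : NFA γ σ :=
    ⟨fun q c => {q' | ∃ w : List β, w.filterMap g = [c] ∧ M.evalFrom q w = q'},
     {M.start},
     {q | ∃ w : List β, w.filterMap g = [] ∧ M.evalFrom q w ∈ M.accept}⟩ with hN
  have key : ∀ (u : List γ) (c : γ) (S : Set σ),
      N.evalFrom S (c :: u) =
        {q' | ∃ q ∈ S, ∃ w : List β, w.filterMap g = c :: u ∧ M.evalFrom q w = q'} := by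
    intro u
    induction u with
    | nil =>
      intro c S
      ext q'
      simp only [NFA.evalFrom, List.foldl_cons, List.foldl_nil, NFA.mem_stepSet]
      constructor
      · rintro ⟨q, hq, w, hw, he⟩; exact ⟨q, hq, w, hw, he⟩
      · rintro ⟨q, hq, w, hw, he⟩; exact ⟨q, hq, w, hw, he⟩
    | cons c' u ih =>
      intro c S
      have : N.evalFrom S (c :: c' :: u) = N.evalFrom (N.stepSet S c) (c' :: u) := rfl
      rw [this, ih]
      ext q'
      simp only [Set.mem_setOf_eq, NFA.mem_stepSet]
      constructor
      · rintro ⟨q₁, ⟨q, hq, w₁, hw₁, he₁⟩, w', hw', he'⟩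
        refine ⟨q, hq, w₁ ++ w', ?_, ?_⟩
        · rw [List.filterMap_append, hw₁, hw']; rfl
        · rw [DFA.evalFrom_of_append, he₁, he']
      · rintro ⟨q, hq, w, hw, he⟩
        obtain ⟨w₁, w₂, rfl, h1, h2⟩ := filterMap_split g w c (c' :: u) hw
        exact ⟨M.evalFrom q w₁, ⟨q, hq, w₁, h1, rfl⟩, w₂, h2,
          by rw [← he, DFA.evalFrom_of_append]⟩
  have acc : N.accepts = {u : List γ | ∃ x ∈ M.accepts, x.filterMap g = u} := by
    ext u
    rw [NFA.mem_accepts]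
    cases u with
    | nil =>
      simp only [NFA.evalFrom, List.foldl_nil]
      constructor
      · rintro ⟨q, ⟨w, hw, ha⟩, hq⟩
        rw [Set.mem_singleton_iff] at hq; subst hq
        exact ⟨w, ha, hw⟩
      · rintro ⟨x, hx, hfx⟩
        exact ⟨M.start, ⟨x, hfx, hx⟩, rfl⟩
    | cons c u' =>
      rw [key]
      constructor
      · rintro ⟨q', ⟨w₂, hw₂, ha⟩, q, hq, w, hw, he⟩
        rw [Set.mem_singleton_iff] at hq; subst hq
        refine ⟨w ++ w₂, ?_, ?_⟩
        · rw [DFA.mem_accepts, DFA.eval, DFA.evalFrom_of_append, he]; exact ha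
        · rw [List.filterMap_append, hw, hw₂, List.append_nil]
      · rintro ⟨x, hx, hfx⟩
        exact ⟨M.evalFrom M.start x, ⟨[], rfl, hx⟩, M.start, rfl, x, hfx, rfl⟩
  haveI : Fintype (Set σ) := by infer_instance
  exact ⟨Set σ, inferInstance, N.toDFA, by rw [NFA.toDFA_correct, acc]; rfl⟩

section Sorted
variable {β : Type}

def sortDFA (β : Type) : DFA (β ⊕ β) (Option Bool) where
  step s x := match s, x with
    | some false, .inl _ => some false
    | some false, .inr _ => some true
    | some true, .inl _ => none
    | some true, .inr _ => some true
    | none, _ => none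
  start := some false
  accept := {s | s ≠ none}

theorem sortDFA_none : ∀ x : List (β ⊕ β), (sortDFA β).evalFrom none x = none := by
  intro x; induction x with
  | nil => rfl
  | cons a x ih => cases a <;> exact ih

theorem sortDFA_true : ∀ x : List (β ⊕ β),
    (sortDFA β).evalFrom (some true) x ≠ none ↔ ∃ v : List β, x = v.map .inr := by
  intro x; induction x with
  | nil => simp
  | cons a x ih =>
    cases a with
    | inl b =>
      constructor
      · intro h; exact absurd (sortDFA_none x) h
      · rintro ⟨v, hv⟩; cases v <;> simp at hv
    | inr b =>
      rw [show (sortDFA β).evalFrom (some true) (.inr b :: x)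
            = (sortDFA β).evalFrom (some true) x from rfl, ih]
      constructor
      · rintro ⟨v, rfl⟩; exact ⟨b :: v, rfl⟩
      · rintro ⟨v, hv⟩
        cases v with
        | nil => simp at hv
        | cons c v => simp at hv; exact ⟨v, hv.2⟩

theorem sortDFA_false : ∀ x : List (β ⊕ β),
    (sortDFA β).evalFrom (some false) x ≠ none ↔
      ∃ u v : List β, x = u.map .inl ++ v.map .inr := by
  intro x; induction x with
  | nil => simp
  | cons a x ih =>
    cases a with
    | inl b =>
      rw [show (sortDFA β).evalFrom (some false) (.inl b :: x)
            = (sortDFA β).evalFrom (some false) x from rfl, ih]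
      constructor
      · rintro ⟨u, v, rfl⟩; exact ⟨b :: u, v, rfl⟩
      · rintro ⟨u, v, hv⟩
        cases u with
        | nil =>
          cases v with
          | nil => simp at hv
          | cons c v => simp at hv
        | cons c u =>
          simp only [List.map_cons, List.cons_append, List.cons.injEq] at hv
          exact ⟨u, v, hv.2⟩
    | inr b =>
      rw [show (sortDFA β).evalFrom (some false) (.inr b :: x)
            = (sortDFA β).evalFrom (some true) x from rfl, sortDFA_true]
      constructor
      · rintro ⟨v, rfl⟩; exact ⟨[], b :: v, rfl⟩
      · rintro ⟨u, v, hv⟩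
        cases u with
        | nil =>
          cases v with
          | nil => simp at hv
          | cons c v => simp at hv; exact ⟨v, hv.2⟩
        | cons c u => simp at hv

theorem sorted_regular :
    Language.IsRegular ({x : List (β ⊕ β) | ∃ u v : List β, x = u.map .inl ++ v.map .inr} :
      Set (List (β ⊕ β))) := by
  refine ⟨Option Bool, inferInstance, sortDFA β, ?_⟩
  ext x
  rw [DFA.mem_accepts]
  exact (sortDFA_false x)

end Sorted

theorem regCat {β : Type} {A B : Set (List β)}
    (hA : Language.IsRegular A) (hB : Language.IsRegular B) :
    Language.IsRegular ({w : List β | ∃ u ∈ A, ∃ v ∈ B, w = u ++ v} : Set (List β)) := by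
  classical
  set getL : β ⊕ β → Option β := Sum.elim some (fun _ => none) with hgetL
  set getR : β ⊕ β → Option β := Sum.elim (fun _ => none) some with hgetR
  have hC : Language.IsRegular
      (({x : List (β ⊕ β) | ∃ u v : List β, x = u.map (Sum.inl : β → β ⊕ β) ++ v.map (Sum.inr : β → β ⊕ β)} ∩
        ({x | x.filterMap getL ∈ A} ∩ {x | x.filterMap getR ∈ B})) : Set (List (β ⊕ β))) :=
    regI sorted_regular (regI (regPre getL hA) (regPre getR hB))
  have := regImg (fun x : β ⊕ β => some (Sum.elim id id x)) hC
  refine Eq.mpr (congrArg Language.IsRegular ?_) this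
  have hL : ∀ (u v : List β),
      (u.map (Sum.inl : β → β ⊕ β) ++ v.map (Sum.inr : β → β ⊕ β)).filterMap getL = u := by
    intro u v
    rw [List.filterMap_append, List.filterMap_map, List.filterMap_map]
    have h1 : getL ∘ (Sum.inl : β → β ⊕ β) = some := rfl
    have h2 : getL ∘ (Sum.inr : β → β ⊕ β) = fun _ => none := rfl
    rw [h1, h2, List.filterMap_some]
    simp [List.filterMap_eq_nil_iff]
  have hR : ∀ (u v : List β),
      (u.map (Sum.inl : β → β ⊕ β) ++ v.map (Sum.inr : β → β ⊕ β)).filterMap getR = v := by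
    intro u v
    rw [List.filterMap_append, List.filterMap_map, List.filterMap_map]
    have h1 : getR ∘ (Sum.inl : β → β ⊕ β) = fun _ => none := rfl
    have h2 : getR ∘ (Sum.inr : β → β ⊕ β) = some := rfl
    rw [h1, h2, List.filterMap_some]
    simp [List.filterMap_eq_nil_iff]
  have hE : ∀ (u v : List β),
      (u.map (Sum.inl : β → β ⊕ β) ++ v.map (Sum.inr : β → β ⊕ β)).filterMap
        (fun x => some (Sum.elim id id x)) = u ++ v := by
    intro u v
    rw [show (fun x : β ⊕ β => some (Sum.elim id id x)) = some ∘ Sum.elim id id from rfl,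
      List.filterMap_eq_map, List.map_append, List.map_map, List.map_map]
    simp
  ext w
  simp only [Set.mem_setOf_eq, Set.mem_inter_iff]
  constructor
  · rintro ⟨u, hu, v, hv, rfl⟩
    exact ⟨u.map (Sum.inl : β → β ⊕ β) ++ v.map (Sum.inr : β → β ⊕ β), ⟨⟨u, v, rfl⟩, by rw [hL]; exact hu, by rw [hR]; exact hv⟩,
      hE u v⟩
  · rintro ⟨x, ⟨⟨u, v, rfl⟩, hu, hv⟩, rfl⟩
    rw [hL] at hu; rw [hR] at hv
    exact ⟨u, hu, v, hv, hE u v⟩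

section Merge
variable {α : Type}

/-- remove `(none, none)` letters -/
def gNN : Option α × Option α → Option (Option α × Option α) :=
  fun x => match x with
    | (none, none) => none
    | x => some x

theorem gNN_snd_some (a : Option α) (b : α) :
    gNN (a, some b) = some (a, some b) := by cases a <;> rfl

theorem gNN_fst_some (b : α) (c : Option α) :
    gNN (some b, c) = some (some b, c) := by cases c <;> rfl

theorem gNN_fst : ∀ x : Option α × Option α, (gNN x).bind Prod.fst = x.1 := by
  rintro ⟨a, b⟩
  cases a <;> cases b <;> rfl

theorem gNN_snd : ∀ x : Option α × Option α, (gNN x).bind Prod.snd = x.2 := by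
  rintro ⟨a, b⟩
  cases a <;> cases b <;> rfl

theorem fst_filterNN (z : List (Option α × Option α)) :
    (z.filterMap gNN).filterMap Prod.fst = z.filterMap Prod.fst := by
  rw [List.filterMap_filterMap]
  exact List.filterMap_congr (fun x _ => gNN_fst x)

theorem snd_filterNN (z : List (Option α × Option α)) :
    (z.filterMap gNN).filterMap Prod.snd = z.filterMap Prod.snd := by
  rw [List.filterMap_filterMap]
  exact List.filterMap_congr (fun x _ => gNN_snd x)

/-- asynchronous merge of two transducer words along the common middle tape -/
def wmerge : List (Option α × Option α) → List (Option α × Option α) →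
    List (Option α × Option α × Option α)
  | [], z₂ => z₂.map (fun x => (none, x))
  | (a, none) :: r₁, z₂ => (a, none, none) :: wmerge r₁ z₂
  | (_, some _) :: _, [] => []
  | (a, some b) :: r₁, (none, c) :: r₂ => (none, none, c) :: wmerge ((a, some b) :: r₁) r₂
  | (a, some b) :: r₁, (some _, c) :: r₂ => (a, some b, c) :: wmerge r₁ r₂
termination_by z₁ z₂ => z₁.length + z₂.length

theorem wmerge_spec :
    ∀ z₁ z₂ : List (Option α × Option α),
      z₁.filterMap Prod.snd = z₂.filterMap Prod.fst →
      ((wmerge z₁ z₂).map (fun t => (t.1, t.2.1))).filterMap gNN = z₁.filterMap gNN ∧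
      ((wmerge z₁ z₂).map (fun t => (t.2.1, t.2.2))).filterMap gNN = z₂.filterMap gNN := by
  intro z₁ z₂ H
  induction z₁, z₂ using wmerge.induct with
  | case1 z₂ =>
    simp only [List.filterMap_nil] at H
    constructor
    · rw [wmerge, List.map_map, List.filterMap_map, List.filterMap_nil]
      rw [List.filterMap_eq_nil_iff]
      intro x hx
      have hx1 : x.1 = none := by
        have := (List.filterMap_eq_nil_iff.mp H.symm) x hx
        exact this
      show gNN ((none : Option α), x.1) = none
      rw [hx1]; rfl
    · rw [wmerge, List.map_map]
      have : ((fun t : Option α × Option α × Option α => (t.2.1, t.2.2)) ∘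
          fun x : Option α × Option α => ((none : Option α), x)) = id := by
        funext x; rfl
      rw [this, List.map_id]
  | case2 a r₁ z₂ ih =>
    have H' : r₁.filterMap Prod.snd = z₂.filterMap Prod.fst := by
      rwa [List.filterMap_cons] at H
    obtain ⟨ih1, ih2⟩ := ih H'
    constructor
    · rw [wmerge, List.map_cons, List.filterMap_cons, List.filterMap_cons]
      cases a with
      | none => exact ih1
      | some a' => rw [show gNN ((some a' : Option α), (none : Option α)) = some (some a', none)
          from rfl]; rw [ih1]
    · rw [wmerge, List.map_cons, List.filterMap_cons]
      rw [show gNN ((none : Option α), (none : Option α)) = none from rfl]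
      exact ih2
  | case3 a b r₁ =>
    exfalso
    rw [List.filterMap_cons] at H
    simp at H
  | case4 a b r₁ c r₂ ih =>
    have H' : ((a, some b) :: r₁ : List (Option α × Option α)).filterMap Prod.snd
        = r₂.filterMap Prod.fst := by
      rwa [List.filterMap_cons (l := r₂)] at H
    obtain ⟨ih1, ih2⟩ := ih H'
    constructor
    · rw [wmerge, List.map_cons, List.filterMap_cons]
      rw [show gNN ((none : Option α), (none : Option α)) = none from rfl]
      exact ih1
    · rw [wmerge, List.map_cons, List.filterMap_cons, List.filterMap_cons (l := r₂)]
      cases c with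
      | none => exact ih2
      | some c' => rw [show gNN ((none : Option α), (some c' : Option α)) = some (none, some c')
          from rfl]; rw [ih2]
  | case5 a b r₁ b' c r₂ ih =>
    rw [List.filterMap_cons, List.filterMap_cons] at H
    simp only at H
    obtain ⟨hb, H'⟩ := List.cons.injEq .. ▸ H
    obtain ⟨ih1, ih2⟩ := ih H'
    constructor
    · rw [wmerge]
      simp only [List.map_cons, List.filterMap_cons, gNN_snd_some, ih1]
    · rw [wmerge]
      simp only [List.map_cons, List.filterMap_cons, gNN_fst_some, ih2, hb]
  end Merge

theorem projs_eq {α : Type} {x y : List (Option α × Option α)}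
    (h : x.filterMap gNN = y.filterMap gNN) :
    x.filterMap Prod.fst = y.filterMap Prod.fst ∧ x.filterMap Prod.snd = y.filterMap Prod.snd :=
  ⟨by rw [← fst_filterNN x, h, fst_filterNN], by rw [← snd_filterNN x, h, snd_filterNN]⟩

theorem ratComp {α : Type} {R₁ R₂ : Set (List α × List α)}
    (h₁ : IsRationalRel R₁) (h₂ : IsRationalRel R₂) :
    IsRationalRel {p : List α × List α | ∃ w, (p.1, w) ∈ R₁ ∧ (w, p.2) ∈ R₂} := by
  obtain ⟨L₁, hL₁, rfl⟩ := h₁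
  obtain ⟨L₂, hL₂, rfl⟩ := h₂
  set I₁ : Set (List (Option α × Option α)) := {u | ∃ x ∈ L₁, x.filterMap gNN = u} with hI₁def
  set I₂ : Set (List (Option α × Option α)) := {u | ∃ x ∈ L₂, x.filterMap gNN = u} with hI₂def
  set g₁ : Option α × Option α × Option α → Option (Option α × Option α) :=
    fun t => gNN (t.1, t.2.1) with hg₁
  set g₂ : Option α × Option α × Option α → Option (Option α × Option α) :=
    fun t => gNN (t.2.1, t.2.2) with hg₂
  set g₃ : Option α × Option α × Option α → Option (Option α × Option α) :=
    fun t => some (t.1, t.2.2) with hg₃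
  set T : Set (List (Option α × Option α × Option α)) :=
    {t | t.filterMap g₁ ∈ I₁} ∩ {t | t.filterMap g₂ ∈ I₂} with hTdef
  have hT : Language.IsRegular T :=
    regI (regPre g₁ (regImg gNN hL₁)) (regPre g₂ (regImg gNN hL₂))
  refine ⟨{z | ∃ t ∈ T, t.filterMap g₃ = z}, regImg g₃ hT, ?_⟩
  -- list computations
  have c₁ : ∀ t : List (Option α × Option α × Option α),
      t.filterMap g₁ = (t.map (fun t => (t.1, t.2.1))).filterMap gNN := by
    intro t; rw [List.filterMap_map]; rfl
  have c₂ : ∀ t : List (Option α × Option α × Option α),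
      t.filterMap g₂ = (t.map (fun t => (t.2.1, t.2.2))).filterMap gNN := by
    intro t; rw [List.filterMap_map]; rfl
  have e₁₁ : ∀ t : List (Option α × Option α × Option α),
      (t.map (fun t => (t.1, t.2.1))).filterMap Prod.fst = t.filterMap (fun t => t.1) := by
    intro t; rw [List.filterMap_map]; rfl
  have e₁₂ : ∀ t : List (Option α × Option α × Option α),
      (t.map (fun t => (t.1, t.2.1))).filterMap Prod.snd = t.filterMap (fun t => t.2.1) := by
    intro t; rw [List.filterMap_map]; rfl
  have e₂₁ : ∀ t : List (Option α × Option α × Option α),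
      (t.map (fun t => (t.2.1, t.2.2))).filterMap Prod.fst = t.filterMap (fun t => t.2.1) := by
    intro t; rw [List.filterMap_map]; rfl
  have e₂₂ : ∀ t : List (Option α × Option α × Option α),
      (t.map (fun t => (t.2.1, t.2.2))).filterMap Prod.snd = t.filterMap (fun t => t.2.2) := by
    intro t; rw [List.filterMap_map]; rfl
  have e₃₁ : ∀ t : List (Option α × Option α × Option α),
      (t.filterMap g₃).filterMap Prod.fst = t.filterMap (fun t => t.1) := by
    intro t; rw [List.filterMap_filterMap]; rfl
  have e₃₂ : ∀ t : List (Option α × Option α × Option α),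
      (t.filterMap g₃).filterMap Prod.snd = t.filterMap (fun t => t.2.2) := by
    intro t; rw [List.filterMap_filterMap]; rfl
  ext p
  simp only [Set.mem_setOf_eq]
  constructor
  · rintro ⟨w, ⟨x₁, hx₁, hp₁⟩, ⟨x₂, hx₂, hp₂⟩⟩
    obtain ⟨h11, h12⟩ := Prod.mk.injEq .. ▸ hp₁
    obtain ⟨h21, h22⟩ := Prod.mk.injEq .. ▸ hp₂
    have hmid : x₁.filterMap Prod.snd = x₂.filterMap Prod.fst := by rw [← h12, ← h21]
    obtain ⟨s₁, s₂⟩ := wmerge_spec x₁ x₂ hmid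
    have t := wmerge x₁ x₂
    have htT : wmerge x₁ x₂ ∈ T := by
      constructor
      · show (wmerge x₁ x₂).filterMap g₁ ∈ I₁
        rw [c₁]
        exact ⟨x₁, hx₁, s₁.symm⟩
      · show (wmerge x₁ x₂).filterMap g₂ ∈ I₂
        rw [c₂]
        exact ⟨x₂, hx₂, s₂.symm⟩
    refine ⟨(wmerge x₁ x₂).filterMap g₃, ⟨wmerge x₁ x₂, htT, rfl⟩, ?_⟩
    have q1 : ((wmerge x₁ x₂).filterMap g₃).filterMap Prod.fst = x₁.filterMap Prod.fst := by
      rw [e₃₁, ← e₁₁]; exact (projs_eq s₁).1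
    have q3 : ((wmerge x₁ x₂).filterMap g₃).filterMap Prod.snd = x₂.filterMap Prod.snd := by
      rw [e₃₂, ← e₂₂]; exact (projs_eq s₂).2
    rw [q1, q3, ← h11, ← h22]
  · rintro ⟨z, ⟨t, ⟨ht₁, ht₂⟩, rfl⟩, rfl⟩
    obtain ⟨x₁, hx₁, hfx₁⟩ := ht₁
    obtain ⟨x₂, hx₂, hfx₂⟩ := ht₂
    rw [c₁] at hfx₁
    rw [c₂] at hfx₂
    obtain ⟨p11, p12⟩ := projs_eq hfx₁
    obtain ⟨p21, p22⟩ := projs_eq hfx₂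
    refine ⟨t.filterMap (fun t => t.2.1), ⟨x₁, hx₁, ?_⟩, ⟨x₂, hx₂, ?_⟩⟩
    · rw [Prod.mk.injEq]
      exact ⟨by rw [e₃₁, ← e₁₁, p11], by rw [← e₁₂, p12]⟩
    · rw [Prod.mk.injEq]
      exact ⟨by rw [← e₂₁, p21], by rw [e₃₂, ← e₂₂, p22]⟩

theorem ratInv {α : Type} {R : Set (List α × List α)} (h : IsRationalRel R) :
    IsRationalRel {p : List α × List α | (p.2, p.1) ∈ R} := by
  obtain ⟨L, hL, rfl⟩ := h
  refine ⟨{u | ∃ x ∈ L, x.filterMap (fun y => some y.swap) = u},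
    regImg (fun y : Option α × Option α => some y.swap) hL, ?_⟩
  have cf : ∀ x : List (Option α × Option α),
      (x.filterMap (fun y => some y.swap)).filterMap Prod.fst = x.filterMap Prod.snd := by
    intro x; rw [List.filterMap_filterMap]; rfl
  have cs : ∀ x : List (Option α × Option α),
      (x.filterMap (fun y => some y.swap)).filterMap Prod.snd = x.filterMap Prod.fst := by
    intro x; rw [List.filterMap_filterMap]; rfl
  ext p
  simp only [Set.mem_setOf_eq]
  constructor
  · rintro ⟨x, hx, hp⟩
    obtain ⟨h1, h2⟩ := Prod.mk.injEq .. ▸ hp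
    refine ⟨x.filterMap (fun y => some y.swap), ⟨x, hx, rfl⟩, ?_⟩
    rw [cf, cs, Prod.mk.injEq]
    exact ⟨h2, h1⟩
  · rintro ⟨z, ⟨x, hx, rfl⟩, hp⟩
    obtain ⟨h1, h2⟩ := Prod.mk.injEq .. ▸ hp
    rw [cf] at h1; rw [cs] at h2
    exact ⟨x, hx, by rw [Prod.mk.injEq]; exact ⟨h2, h1⟩⟩

theorem ratUnion {α : Type} {R₁ R₂ : Set (List α × List α)}
    (h₁ : IsRationalRel R₁) (h₂ : IsRationalRel R₂) : IsRationalRel (R₁ ∪ R₂) := by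
  obtain ⟨L₁, hL₁, rfl⟩ := h₁
  obtain ⟨L₂, hL₂, rfl⟩ := h₂
  refine ⟨(L₁ ∪ L₂ : Set (List (Option α × Option α))), regU hL₁ hL₂, ?_⟩
  ext p
  constructor
  · rintro (⟨z, hz, hp⟩ | ⟨z, hz, hp⟩)
    · exact ⟨z, Or.inl hz, hp⟩
    · exact ⟨z, Or.inr hz, hp⟩
  · rintro ⟨z, hz | hz, hp⟩
    · exact Or.inl ⟨z, hz, hp⟩
    · exact Or.inr ⟨z, hz, hp⟩

theorem ratTest {α : Type} {E : Set (List α)} (hE : Language.IsRegular E) :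
    IsRationalRel {p : List α × List α | ∃ u ∈ E, p = (u, u)} := by
  set g : α → Option (Option α × Option α) := fun a => some (some a, some a) with hg
  have cf : ∀ u : List α, (u.filterMap g).filterMap Prod.fst = u := by
    intro u; rw [List.filterMap_filterMap]
    exact List.filterMap_some
  have cs : ∀ u : List α, (u.filterMap g).filterMap Prod.snd = u := by
    intro u; rw [List.filterMap_filterMap]
    exact List.filterMap_some
  refine ⟨{z | ∃ u ∈ E, u.filterMap g = z}, regImg g hE, ?_⟩
  ext p
  simp only [Set.mem_setOf_eq]
  constructor
  · rintro ⟨u, hu, rfl⟩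
    exact ⟨u.filterMap g, ⟨u, hu, rfl⟩, by rw [cf, cs]⟩
  · rintro ⟨z, ⟨u, hu, rfl⟩, hp⟩
    exact ⟨u, hu, by rw [cf, cs] at hp; exact hp⟩

theorem ratPush {α : Type} {E : Set (List α)} (hE : Language.IsRegular E) :
    IsRationalRel {p : List α × List α | ∃ u ∈ E, ∃ v : List α, p = (u ++ v, v)} := by
  set gl : α → Option (Option α × Option α) := fun a => some (some a, none) with hgl
  set gd : α → Option (Option α × Option α) := fun a => some (some a, some a) with hgd
  have clf : ∀ u : List α, (u.filterMap gl).filterMap Prod.fst = u := by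
    intro u; rw [List.filterMap_filterMap]; exact List.filterMap_some
  have cls : ∀ u : List α, (u.filterMap gl).filterMap Prod.snd = [] := by
    intro u; rw [List.filterMap_filterMap]
    exact List.filterMap_eq_nil_iff.mpr (fun a _ => rfl)
  have cdf : ∀ v : List α, (v.filterMap gd).filterMap Prod.fst = v := by
    intro v; rw [List.filterMap_filterMap]; exact List.filterMap_some
  have cds : ∀ v : List α, (v.filterMap gd).filterMap Prod.snd = v := by
    intro v; rw [List.filterMap_filterMap]; exact List.filterMap_some
  have hA : Language.IsRegular {z : List (Option α × Option α) | ∃ u ∈ E, u.filterMap gl = z} :=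
    regImg gl hE
  have hB : Language.IsRegular
      {z : List (Option α × Option α) | ∃ v ∈ (Set.univ : Set (List α)), v.filterMap gd = z} :=
    regImg gd regUniv
  refine ⟨{w | ∃ zu ∈ {z : List (Option α × Option α) | ∃ u ∈ E, u.filterMap gl = z},
    ∃ zv ∈ {z : List (Option α × Option α) | ∃ v ∈ (Set.univ : Set (List α)),
      v.filterMap gd = z}, w = zu ++ zv}, regCat hA hB, ?_⟩
  ext p
  simp only [Set.mem_setOf_eq]
  constructor
  · rintro ⟨u, hu, v, rfl⟩
    refine ⟨u.filterMap gl ++ v.filterMap gd,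
      ⟨u.filterMap gl, ⟨u, hu, rfl⟩, v.filterMap gd, ⟨v, Set.mem_univ v, rfl⟩, rfl⟩, ?_⟩
    rw [List.filterMap_append, List.filterMap_append, clf, cls, cdf, cds, List.nil_append]
  · rintro ⟨z, ⟨zu, ⟨u, hu, rfl⟩, zv, ⟨v, -, rfl⟩, rfl⟩, rfl⟩
    refine ⟨u, hu, v, ?_⟩
    rw [List.filterMap_append, List.filterMap_append, clf, cls, cdf, cds, List.nil_append]

theorem regDia {α : Type} {R : Set (List α × List α)} {E : Set (List α)}
    (hR : IsRationalRel R) (hE : Language.IsRegular E) :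
    Language.IsRegular {u : List α | ∃ v ∈ E, (u, v) ∈ R} := by
  obtain ⟨L, hL, rfl⟩ := hR
  have hS : Language.IsRegular
      ((L ∩ {z | z.filterMap Prod.snd ∈ E}) : Set (List (Option α × Option α))) :=
    regI hL (regPre Prod.snd hE)
  have := regImg Prod.fst hS
  refine Eq.mpr (congrArg Language.IsRegular ?_) this
  ext u
  simp only [Set.mem_setOf_eq, Set.mem_inter_iff]
  constructor
  · rintro ⟨v, hv, z, hz, hp⟩
    obtain ⟨h1, h2⟩ := Prod.mk.injEq .. ▸ hp
    exact ⟨z, ⟨hz, by show _ ∈ E; rw [← h2]; exact hv⟩, h1.symm⟩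
  · rintro ⟨z, ⟨hz, hv⟩, rfl⟩
    exact ⟨z.filterMap Prod.snd, hv, z, hz, rfl⟩

theorem regSingleton {α : Type} (a : α) :
    Language.IsRegular ({[a]} : Set (List α)) := by
  classical
  set M : DFA α (Fin 3) :=
    ⟨fun q b => if q = 0 ∧ b = a then 1 else 2, 0, {1}⟩ with hM
  have ev2 : ∀ (x : List α) (q : Fin 3), q ≠ 0 → M.evalFrom q x ≠ 0 ∧ M.evalFrom q x ≠ 1 ∨
      M.evalFrom q x = q := by
    intro x
    induction x with
    | nil => intro q hq; exact Or.inr rfl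
    | cons b x ih =>
      intro q hq
      have hstep : M.step q b = 2 := by
        show (if q = 0 ∧ b = a then (1 : Fin 3) else 2) = 2
        rw [if_neg (fun h => hq h.1)]
      show (M.evalFrom (M.step q b) x ≠ 0 ∧ M.evalFrom (M.step q b) x ≠ 1) ∨
        M.evalFrom (M.step q b) x = q
      rw [hstep]
      rcases ih 2 (by decide) with h | h
      · exact Or.inl h
      · exact Or.inl (by rw [h]; exact ⟨by decide, by decide⟩)
  refine ⟨Fin 3, inferInstance, M, ?_⟩
  ext x
  rw [DFA.mem_accepts]
  constructor
  · intro hx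
    match x with
    | [] => exact absurd hx (by simp [hM, DFA.eval])
    | [b] =>
      have : M.eval [b] = if (0 : Fin 3) = 0 ∧ b = a then 1 else 2 := rfl
      rw [this] at hx
      by_cases hb : b = a
      · rw [hb]; rfl
      · rw [if_neg (fun h => hb h.2)] at hx
        exact ((by decide : (2 : Fin 3) ≠ 1) hx).elim
    | b :: c :: x' =>
      exfalso
      have h1 : M.eval (b :: c :: x') = M.evalFrom (M.step (M.step 0 b) c) x' := rfl
      have hb : M.step 0 b ≠ 0 := by
        show (if (0 : Fin 3) = 0 ∧ b = a then (1:Fin 3) else 2) ≠ 0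
        split <;> decide
      have hc : M.step (M.step 0 b) c = 2 := by
        show (if M.step 0 b = 0 ∧ c = a then (1:Fin 3) else 2) = 2
        rw [if_neg (fun h => hb h.1)]
      rw [h1, hc] at hx
      rcases ev2 x' 2 (by decide) with h | h
      · exact h.2 hx
      · rw [h] at hx; exact (by decide : (2 : Fin 3) ≠ 1) hx
  · rintro rfl
    show (if (0 : Fin 3) = 0 ∧ a = a then (1 : Fin 3) else 2) ∈ ({1} : Set (Fin 3))
    rw [if_pos ⟨rfl, rfl⟩]; rfl


mutual
  theorem progRat {α AP REL : Type} [Fintype α]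
      (Rb : REL → Set (List α × List α)) (hRb : ∀ π, IsRationalRel (Rb π))
      (V : AP → Set (List α)) (hV : ∀ p, Language.IsRegular (V p)) :
      ∀ β : WProg α AP REL, IsRationalRel (WRel Rb V β)
    | .base π => hRb π
    | .inv β => by
        simp only [WRel]
        exact ratInv (progRat Rb hRb V hV β)
    | .union β γ => by
        simp only [WRel]
        exact ratUnion (progRat Rb hRb V hV β) (progRat Rb hRb V hV γ)
    | .comp β γ => by
        simp only [WRel]
        exact ratComp (progRat Rb hRb V hV β) (progRat Rb hRb V hV γ)
    | .test φ => by
        simp only [WRel]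
        exact ratTest (formReg Rb hRb V hV φ)
    | .push φ => by
        simp only [WRel]
        exact ratPush (formReg Rb hRb V hV φ)

  theorem formReg {α AP REL : Type} [Fintype α]
      (Rb : REL → Set (List α × List α)) (hRb : ∀ π, IsRationalRel (Rb π))
      (V : AP → Set (List α)) (hV : ∀ p, Language.IsRegular (V p)) :
      ∀ φ : WForm α AP REL, Language.IsRegular (WExt Rb V φ)
    | .atom p => hV p
    | .letter a => by
        simp only [WExt]
        exact regSingleton a
    | .neg φ => by
        simp only [WExt]
        exact regC (formReg Rb hRb V hV φ)
    | .disj φ ψ => by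
        simp only [WExt]
        exact regU (formReg Rb hRb V hV φ) (formReg Rb hRb V hV ψ)
    | .dia β φ => by
        simp only [WExt]
        exact regDia (progRat Rb hRb V hV β) (formReg Rb hRb V hV φ)
end

/-- In a rational Kripke word-model over a finite alphabet (state set
`Σ*`, rational atomic relations, regular atomic valuations), every WPDL program
defines a rational relation and every WPDL formula has a regular extension. -/
theorem wpdl_rational_and_regular {α AP REL : Type} [Fintype α]
    (Rb : REL → Set (List α × List α)) (hRb : ∀ π, IsRationalRel (Rb π))
    (V : AP → Set (List α)) (hV : ∀ p, Language.IsRegular (V p)) :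
    (∀ β : WProg α AP REL, IsRationalRel (WRel Rb V β)) ∧
    (∀ φ : WForm α AP REL, Language.IsRegular (WExt Rb V φ)) := by
  exact ⟨fun β => progRat Rb hRb V hV β, fun φ => formReg Rb hRb V hV φ⟩
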